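/- Let G be a second countable locally compact group, let μ be a Borel measure on G which is finite on compact subsets, and let π be a strongly continuous unitary representation of G on a complex Hilbert space H. If for all ξ, η ∈ H one has ∫_G |⟨π(g)ξ, η⟩|² dμ(g) < ∞, then there exists C > 0 such that for all unit vectors ξ, ξ', η, η' ∈ H one has ∫_G |⟨π(g)ξ, ξ'⟩| · |⟨π(g)η, η'⟩| dμ(g) ≤ C. -/

import Mathlib

open MeasureTheory Filter
open scoped ENNReal NNReal

/-- Let `G` be a second countable locally compact group, `μ` a Borel measure
on `G` finite on compact subsets, and `π` a strongly continuous unitary representation of `G`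
on a complex Hilbert space `H`. If `∫_G |⟨π(g)ξ, η⟩|² dμ(g) < ∞` for all `ξ, η ∈ H`, then
there is `C > 0` such that for all unit vectors `ξ, ξ', η, η'` one has
`∫_G |⟨π(g)ξ, ξ'⟩| · |⟨π(g)η, η'⟩| dμ(g) ≤ C`. -/
theorem stmt1
    {G : Type*} [Group G] [TopologicalSpace G] [IsTopologicalGroup G]
    [LocallyCompactSpace G] [SecondCountableTopology G]
    [MeasurableSpace G] [BorelSpace G]
    (μ : Measure G) [IsFiniteMeasureOnCompacts μ]
    {H : Type*} [NormedAddCommGroup H] [InnerProductSpace ℂ H] [CompleteSpace H]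
    (π : G →* (H ≃ₗᵢ[ℂ] H))
    (hπcont : ∀ ξ : H, Continuous fun g : G => π g ξ)
    (hsq : ∀ ξ η : H, ∫⁻ g, ENNReal.ofReal (‖(inner ℂ ((π g) ξ) η : ℂ)‖ ^ 2) ∂μ < ⊤) :
    ∃ C > 0, ∀ ξ ξ' η η' : H, ‖ξ‖ = 1 → ‖ξ'‖ = 1 → ‖η‖ = 1 → ‖η'‖ = 1 →
      ∫⁻ g, ENNReal.ofReal (‖(inner ℂ ((π g) ξ) ξ' : ℂ)‖ * ‖(inner ℂ ((π g) η) η' : ℂ)‖) ∂μ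
        ≤ ENNReal.ofReal C := by
  classical
  -- matrix coefficient
  set F : H → H → G → ℂ := fun ξ η g => inner ℂ ((π g) ξ) η with hFdef
  have hcont : ∀ ξ η, Continuous (F ξ η) := fun ξ η =>
    (hπcont ξ).inner continuous_const
  have hmeas : ∀ ξ η, AEStronglyMeasurable (F ξ η) μ := fun ξ η =>
    (hcont ξ η).aestronglyMeasurable
  have hennmeas : ∀ ξ η, Measurable fun g => ((‖F ξ η g‖₊ : ℝ≥0∞)) := fun ξ η =>
    (hcont ξ η).measurable.nnnorm.coe_nnreal_ennreal
  -- the squared L² "norm"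
  set J : H → H → ℝ≥0∞ := fun ξ η => ∫⁻ g, (‖F ξ η g‖₊ : ℝ≥0∞) ^ (2 : ℝ) ∂μ with hJdef
  have hJmeas : ∀ ξ η, Measurable fun g => (‖F ξ η g‖₊ : ℝ≥0∞) ^ (2 : ℝ) := fun ξ η =>
    ENNReal.continuous_rpow_const.measurable.comp (hennmeas ξ η)
  have hpt : ∀ (ξ η : H) (g : G),
      (‖F ξ η g‖₊ : ℝ≥0∞) ^ (2 : ℝ) = ENNReal.ofReal (‖F ξ η g‖ ^ 2) := by
    intro ξ η g
    rw [ENNReal.ofReal_pow (norm_nonneg _), ofReal_norm_eq_enorm, enorm_eq_nnnorm,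
      ← ENNReal.rpow_natCast]
    norm_num
  have hJfin : ∀ ξ η, J ξ η < ⊤ := by
    intro ξ η
    have := hsq ξ η
    simp only [hJdef, hpt]
    exact this
  -- relation with eLpNorm
  have hNJ : ∀ ξ η, eLpNorm (F ξ η) 2 μ = (J ξ η) ^ (1 / 2 : ℝ) := by
    intro ξ η
    rw [eLpNorm_eq_lintegral_rpow_enorm_toReal (by norm_num) (by norm_num)]
    norm_num [hJdef, enorm_eq_nnnorm]
  set N : H → H → ℝ≥0∞ := fun ξ η => eLpNorm (F ξ η) 2 μ with hNdef
  -- additivity properties of matrix coefficients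
  have hFadd_left : ∀ ξ ξ' η, F (ξ + ξ') η = F ξ η + F ξ' η := by
    intro ξ ξ' η; funext g
    simp [hFdef, inner_add_left]
  have hFadd_right : ∀ ξ η η', F ξ (η + η') = F ξ η + F ξ η' := by
    intro ξ η η'; funext g
    simp [hFdef, inner_add_right]
  have hFneg_left : ∀ ξ η, F (-ξ) η = -(F ξ η) := by
    intro ξ η; funext g; simp [hFdef, inner_neg_left]
  have hFneg_right : ∀ ξ η, F ξ (-η) = -(F ξ η) := by
    intro ξ η; funext g; simp [hFdef, inner_neg_right]
  have hNadd_left : ∀ ξ ξ' η, N (ξ + ξ') η ≤ N ξ η + N ξ' η := by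
    intro ξ ξ' η
    simp only [hNdef, hFadd_left]
    exact eLpNorm_add_le (hmeas ξ η) (hmeas ξ' η) one_le_two
  have hNadd_right : ∀ ξ η η', N ξ (η + η') ≤ N ξ η + N ξ η' := by
    intro ξ η η'
    simp only [hNdef, hFadd_right]
    exact eLpNorm_add_le (hmeas ξ η) (hmeas ξ η') one_le_two
  have hNneg_left : ∀ ξ η, N (-ξ) η = N ξ η := by
    intro ξ η; simp only [hNdef, hFneg_left]; exact eLpNorm_neg _ _ _
  have hNneg_right : ∀ ξ η, N ξ (-η) = N ξ η := by
    intro ξ η; simp only [hNdef, hFneg_right]; exact eLpNorm_neg _ _ _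
  -- the closed sets for Baire category
  set S : ℕ → Set (H × H) := fun n => {p | J p.1 p.2 ≤ n} with hSdef
  have hSclosed : ∀ n, IsClosed (S n) := by
    intro n
    apply IsSeqClosed.isClosed
    intro x p hx hxp
    have h1 : Tendsto (fun k => (x k).1) atTop (nhds p.1) :=
      (continuous_fst.tendsto p).comp hxp
    have h2 : Tendsto (fun k => (x k).2) atTop (nhds p.2) :=
      (continuous_snd.tendsto p).comp hxp
    have hptw : ∀ g : G, Tendsto (fun k => (‖F (x k).1 (x k).2 g‖₊ : ℝ≥0∞) ^ (2 : ℝ))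
        atTop (nhds ((‖F p.1 p.2 g‖₊ : ℝ≥0∞) ^ (2 : ℝ))) := by
      intro g
      have hF : Tendsto (fun k => F (x k).1 (x k).2 g) atTop (nhds (F p.1 p.2 g)) := by
        exact Filter.Tendsto.inner (((π g).continuous.tendsto _).comp h1) h2
      have hn : Tendsto (fun k => (‖F (x k).1 (x k).2 g‖₊ : ℝ≥0∞)) atTop
          (nhds ((‖F p.1 p.2 g‖₊ : ℝ≥0∞))) :=
        (ENNReal.continuous_coe.tendsto _).comp (hF.nnnorm)
      exact (ENNReal.continuous_rpow_const.tendsto _).comp hn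
    have key : J p.1 p.2 ≤ liminf (fun k => J (x k).1 (x k).2) atTop := by
      calc J p.1 p.2
          = ∫⁻ g, liminf (fun k => (‖F (x k).1 (x k).2 g‖₊ : ℝ≥0∞) ^ (2 : ℝ)) atTop ∂μ := by
            refine lintegral_congr fun g => ?_
            exact ((hptw g).liminf_eq).symm
        _ ≤ liminf (fun k => J (x k).1 (x k).2) atTop :=
            lintegral_liminf_le fun k => hJmeas _ _
    refine le_trans key ?_
    have : liminf (fun k => J (x k).1 (x k).2) atTop ≤ liminf (fun _ : ℕ => (n : ℝ≥0∞)) atTop :=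
      Filter.liminf_le_liminf (Filter.Eventually.of_forall fun k => hx k)
    simpa using this
  have hScover : ⋃ n, S n = Set.univ := by
    ext p
    simp only [Set.mem_iUnion, Set.mem_univ, iff_true, hSdef, Set.mem_setOf_eq]
    obtain ⟨n, hn⟩ := ENNReal.exists_nat_gt (hJfin p.1 p.2).ne
    exact ⟨n, hn.le⟩
  obtain ⟨n, hn⟩ := nonempty_interior_of_iUnion_of_closed hSclosed hScover
  obtain ⟨p₀, hp₀⟩ := hn
  rw [mem_interior_iff_mem_nhds, Metric.mem_nhds_iff] at hp₀
  obtain ⟨ε, hε, hball⟩ := hp₀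
  set ξ₀ := p₀.1
  set η₀ := p₀.2
  set M : ℝ≥0∞ := (n : ℝ≥0∞) ^ (1 / 2 : ℝ) with hMdef
  have hMfin : M ≠ ⊤ := by
    simp [hMdef, ENNReal.rpow_eq_top_iff]
  -- all points of the ball have N ≤ M
  have hNM : ∀ u v : H, ‖u‖ < ε → ‖v‖ < ε → N (ξ₀ + u) (η₀ + v) ≤ M := by
    intro u v hu hv
    have hmem : (ξ₀ + u, η₀ + v) ∈ Metric.ball p₀ ε := by
      rw [Metric.mem_ball, Prod.dist_eq]
      simp only [dist_eq_norm]
      have h1 : ξ₀ + u - p₀.1 = u := by simp [ξ₀]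
      have h2 : η₀ + v - p₀.2 = v := by simp [η₀]
      rw [h1, h2]
      exact max_lt hu hv
    have hS := hball hmem
    have hJle : J (ξ₀ + u) (η₀ + v) ≤ (n : ℝ≥0∞) := hS
    show eLpNorm (F (ξ₀ + u) (η₀ + v)) 2 μ ≤ M
    rw [hNJ]
    exact ENNReal.rpow_le_rpow hJle (by norm_num)
  -- from this, N(u,v) ≤ 4M for all small u, v
  have hsmall : ∀ u v : H, ‖u‖ < ε → ‖v‖ < ε → N u v ≤ 4 * M := by
    intro u v hu hv
    have hz : ‖(0 : H)‖ < ε := by simpa using hε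
    have hstep : ∀ w : H, ‖w‖ < ε → N (ξ₀ + u) w ≤ 2 * M ∧ N ξ₀ w ≤ 2 * M := by
      intro w hw
      constructor
      · have h1 : N (ξ₀ + u) (η₀ + w) ≤ M := hNM u w hu hw
        have h2 : N (ξ₀ + u) (η₀ + 0) ≤ M := hNM u 0 hu hz
        have h3 : N (ξ₀ + u) w = N (ξ₀ + u) ((η₀ + w) + (-(η₀ + 0))) := by
          congr 1; abel
        rw [h3]
        calc N (ξ₀ + u) ((η₀ + w) + (-(η₀ + 0)))
            ≤ N (ξ₀ + u) (η₀ + w) + N (ξ₀ + u) (-(η₀ + 0)) := hNadd_right _ _ _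
          _ = N (ξ₀ + u) (η₀ + w) + N (ξ₀ + u) (η₀ + 0) := by rw [hNneg_right]
          _ ≤ M + M := add_le_add h1 h2
          _ = 2 * M := (two_mul M).symm
      · have h1 : N (ξ₀ + 0) (η₀ + w) ≤ M := hNM 0 w hz hw
        have h2 : N (ξ₀ + 0) (η₀ + 0) ≤ M := hNM 0 0 hz hz
        have h3 : N ξ₀ w = N (ξ₀ + 0) ((η₀ + w) + (-(η₀ + 0))) := by
          rw [add_zero]; congr 1; abel
        rw [h3]
        calc N (ξ₀ + 0) ((η₀ + w) + (-(η₀ + 0)))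
            ≤ N (ξ₀ + 0) (η₀ + w) + N (ξ₀ + 0) (-(η₀ + 0)) := hNadd_right _ _ _
          _ = N (ξ₀ + 0) (η₀ + w) + N (ξ₀ + 0) (η₀ + 0) := by rw [hNneg_right]
          _ ≤ M + M := add_le_add h1 h2
          _ = 2 * M := (two_mul M).symm
    have h4 : N u v = N ((ξ₀ + u) + (-ξ₀)) v := by congr 1; abel
    rw [h4]
    calc N ((ξ₀ + u) + (-ξ₀)) v
        ≤ N (ξ₀ + u) v + N (-ξ₀) v := hNadd_left _ _ _
      _ = N (ξ₀ + u) v + N ξ₀ v := by rw [hNneg_left]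
      _ ≤ 2 * M + 2 * M := add_le_add (hstep v hv).1 (hstep v hv).2
      _ = 4 * M := by ring
  -- scaling to unit vectors
  set c : ℝ := ε / 2 with hcdef
  have hc : 0 < c := by positivity
  set B : ℝ≥0∞ := 4 * M / ENNReal.ofReal (c ^ 2) with hBdef
  have hBfin : B ≠ ⊤ := by
    rw [hBdef]
    exact (ENNReal.div_lt_top (ENNReal.mul_ne_top (by norm_num) hMfin)
      (by simp [ENNReal.ofReal_eq_zero, not_le, hc, pow_pos, hc.ne'])).ne
  have hNB : ∀ ξ η : H, ‖ξ‖ = 1 → ‖η‖ = 1 → N ξ η ≤ B := by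
    intro ξ η hξ hη
    have hnu : ‖(c : ℂ) • ξ‖ < ε := by
      rw [norm_smul, hξ, mul_one, Complex.norm_real, Real.norm_eq_abs,
        abs_of_pos hc]
      rw [hcdef]; linarith
    have hnv : ‖(c : ℂ) • η‖ < ε := by
      rw [norm_smul, hη, mul_one, Complex.norm_real, Real.norm_eq_abs,
        abs_of_pos hc]
      rw [hcdef]; linarith
    have hsc := hsmall ((c : ℂ) • ξ) ((c : ℂ) • η) hnu hnv
    -- F (c•ξ) (c•η) = (c^2 : ℂ) • F ξ η
    have hFsc : F ((c : ℂ) • ξ) ((c : ℂ) • η) = ((c : ℂ) ^ 2) • F ξ η := by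
      funext g
      simp only [hFdef, LinearIsometryEquiv.map_smul, inner_smul_left, inner_smul_right,
        Pi.smul_apply, smul_eq_mul, Complex.conj_ofReal]
      ring
    have hNsc : N ((c : ℂ) • ξ) ((c : ℂ) • η) = ‖(c : ℂ) ^ 2‖₊ • N ξ η := by
      rw [hNdef]
      simp only [hFsc]
      exact eLpNorm_const_smul _ _ _ _
    rw [hNsc] at hsc
    have hnorm : (‖(c : ℂ) ^ 2‖₊ : ℝ≥0∞) = ENNReal.ofReal (c ^ 2) := by
      have : ‖(c : ℂ) ^ 2‖ = c ^ 2 := by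
        rw [norm_pow, Complex.norm_real, Real.norm_eq_abs, abs_of_pos hc]
      rw [← enorm_eq_nnnorm, ← ofReal_norm_eq_enorm, this]
    rw [hBdef, ENNReal.le_div_iff_mul_le]
    · rw [mul_comm]
      rw [ENNReal.smul_def, smul_eq_mul, hnorm] at hsc
      exact hsc
    · left; simp [ENNReal.ofReal_eq_zero, not_le, hc, pow_pos, hc.ne']
    · left; exact ENNReal.ofReal_ne_top
  -- conclude with Cauchy-Schwarz
  refine ⟨(B * B).toReal + 1, by positivity, ?_⟩
  intro ξ ξ' η η' hξ hξ' hη hη'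
  have hCS : ∫⁻ g, ((fun g => (‖F ξ ξ' g‖₊ : ℝ≥0∞)) * fun g => (‖F η η' g‖₊ : ℝ≥0∞)) g ∂μ
      ≤ (∫⁻ g, (‖F ξ ξ' g‖₊ : ℝ≥0∞) ^ (2 : ℝ) ∂μ) ^ (1 / 2 : ℝ) *
        (∫⁻ g, (‖F η η' g‖₊ : ℝ≥0∞) ^ (2 : ℝ) ∂μ) ^ (1 / 2 : ℝ) :=
    ENNReal.lintegral_mul_le_Lp_mul_Lq μ Real.HolderConjugate.two_two
      (hennmeas ξ ξ').aemeasurable (hennmeas η η').aemeasurable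
  have hlhs : ∫⁻ g, ENNReal.ofReal (‖(inner ℂ ((π g) ξ) ξ' : ℂ)‖ * ‖(inner ℂ ((π g) η) η' : ℂ)‖) ∂μ
      = ∫⁻ g, ((fun g => (‖F ξ ξ' g‖₊ : ℝ≥0∞)) * fun g => (‖F η η' g‖₊ : ℝ≥0∞)) g ∂μ := by
    refine lintegral_congr fun g => ?_
    simp only [Pi.mul_apply]
    rw [ENNReal.ofReal_mul (norm_nonneg _), ofReal_norm_eq_enorm,
      ofReal_norm_eq_enorm]
    rfl
  rw [hlhs]
  refine hCS.trans ?_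
  have h1 : (∫⁻ g, (‖F ξ ξ' g‖₊ : ℝ≥0∞) ^ (2 : ℝ) ∂μ) ^ (1 / 2 : ℝ) = N ξ ξ' := (hNJ ξ ξ').symm
  have h2 : (∫⁻ g, (‖F η η' g‖₊ : ℝ≥0∞) ^ (2 : ℝ) ∂μ) ^ (1 / 2 : ℝ) = N η η' := (hNJ η η').symm
  rw [h1, h2]
  have hBB : N ξ ξ' * N η η' ≤ B * B :=
    mul_le_mul' (hNB ξ ξ' hξ hξ') (hNB η η' hη hη')
  refine hBB.trans ?_
  have hBBfin : B * B ≠ ⊤ := ENNReal.mul_ne_top hBfin hBfin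
  calc B * B = ENNReal.ofReal ((B * B).toReal) := (ENNReal.ofReal_toReal hBBfin).symm
    _ ≤ ENNReal.ofReal ((B * B).toReal + 1) := ENNReal.ofReal_le_ofReal (by linarith)
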